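/- Let a ≠ 0 and c be real constants and let T ⊂ (0, ∞) be an open interval on which (1 − a²)t² − 2ac·t − c² > 0 and a·t + c > 0. Define y : T → ℝ by y(t) = √((1 − a²)t² − 2ac·t − c²)/t. Then 1 − y(t)² = ((a·t + c)/t)², √(1 − y(t)²) = (a·t + c)/t, and y satisfies 1 − y(t)² − (t/2)·(y²)'(t) = a·√(1 − y(t)²) for all t ∈ T. -/

import Mathlib

/-- Case (ii) of the classification of meridian surfaces with parallel normal bundle:
`y(t) = √((1 − a²)t² − 2act − c²)/t` satisfies `1 − y² = ((at + c)/t)²`,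
`√(1 − y²) = (at + c)/t`, and solves the ODE `1 − y² − (t/2)(y²)' = a√(1 − y²)`. -/
theorem parallel_case_ii_ode_solution
    (a c : ℝ) (ha : a ≠ 0)
    (T : Set ℝ) (hT : IsOpen T) (hTc : T.OrdConnected) (hTsub : T ⊆ Set.Ioi 0)
    (hpos : ∀ t ∈ T, 0 < (1 - a ^ 2) * t ^ 2 - 2 * a * c * t - c ^ 2)
    (hac : ∀ t ∈ T, 0 < a * t + c)
    (y : ℝ → ℝ)
    (hy : ∀ t ∈ T, y t = Real.sqrt ((1 - a ^ 2) * t ^ 2 - 2 * a * c * t - c ^ 2) / t) :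
    ∀ t ∈ T,
      1 - (y t) ^ 2 = ((a * t + c) / t) ^ 2 ∧
      Real.sqrt (1 - (y t) ^ 2) = (a * t + c) / t ∧
      1 - (y t) ^ 2 - (t / 2) * deriv (fun s => (y s) ^ 2) t =
        a * Real.sqrt (1 - (y t) ^ 2) := by
  intro t ht
  have ht0 : 0 < t := hTsub ht
  have htne : t ≠ 0 := ne_of_gt ht0
  have hQ := hpos t ht
  have hacpos := hac t ht
  have hsq : y t ^ 2 = ((1 - a ^ 2) * t ^ 2 - 2 * a * c * t - c ^ 2) / t ^ 2 := by
    rw [hy t ht, div_pow, Real.sq_sqrt hQ.le]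
  have key : 1 - y t ^ 2 = ((a * t + c) / t) ^ 2 := by
    rw [hsq]; field_simp; ring
  have hnn : (0:ℝ) ≤ (a * t + c) / t := (div_pos hacpos ht0).le
  refine ⟨key, by rw [key, Real.sqrt_sq hnn], ?_⟩
  have hev : (fun s => y s ^ 2) =ᶠ[nhds t]
      fun s => ((1 - a ^ 2) * s ^ 2 - 2 * a * c * s - c ^ 2) / s ^ 2 := by
    filter_upwards [hT.mem_nhds ht] with s hs
    rw [hy s hs, div_pow, Real.sq_sqrt (hpos s hs).le]
  have hden : HasDerivAt (fun s : ℝ => s ^ 2) (2 * t) t := by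
    simpa using hasDerivAt_pow 2 t
  have hnum : HasDerivAt (fun s => (1 - a ^ 2) * s ^ 2 - 2 * a * c * s - c ^ 2)
      (2 * (1 - a ^ 2) * t - 2 * a * c) t := by
    have := ((hden.const_mul (1 - a ^ 2)).sub ((hasDerivAt_id t).const_mul (2 * a * c))).sub_const
      (c ^ 2)
    exact this.congr_deriv (by ring)
  have hD : HasDerivAt (fun s => ((1 - a ^ 2) * s ^ 2 - 2 * a * c * s - c ^ 2) / s ^ 2)
      (((2 * (1 - a ^ 2) * t - 2 * a * c) * t ^ 2 -
          ((1 - a ^ 2) * t ^ 2 - 2 * a * c * t - c ^ 2) * (2 * t)) / (t ^ 2) ^ 2) t :=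
    hnum.div hden (by positivity)
  rw [hev.deriv_eq, hD.deriv, key, Real.sqrt_sq hnn]
  field_simp
  ring
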